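/- For all real numbers a, b, n with b > a > 0 and 0 < n ≤ 2·√(b² − a²): arctan( (b² − a² − n²/4) / (2ab) ) ≤ arctan( (2b − n) / (2a) ) + arctan( 2a / (2b + n) ). -/

import Mathlib

open Real

theorem arctan_inequality (a b n : ℝ) (ha : 0 < a) (hab : a < b)
    (hn : 0 < n) (hn2 : n ≤ 2 * Real.sqrt (b ^ 2 - a ^ 2)) :
    Real.arctan ((b ^ 2 - a ^ 2 - n ^ 2 / 4) / (2 * a * b))
      ≤ Real.arctan ((2 * b - n) / (2 * a)) + Real.arctan (2 * a / (2 * b + n)) := by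
  have hb : 0 < b := ha.trans hab
  have hba : (0:ℝ) ≤ b ^ 2 - a ^ 2 := by nlinarith
  have hs := Real.sq_sqrt hba
  have hn4 : n ^ 2 ≤ 4 * (b ^ 2 - a ^ 2) := by
    nlinarith [Real.sqrt_nonneg (b ^ 2 - a ^ 2)]
  have h2bn : 0 < 2 * b + n := by linarith
  have hxy : ((2 * b - n) / (2 * a)) * (2 * a / (2 * b + n)) < 1 := by
    rw [div_mul_div_comm, div_lt_one (by positivity)]
    nlinarith
  rw [Real.arctan_add hxy]
  apply Real.arctan_strictMono.monotone
  rw [div_le_div_iff₀ (by positivity) (by linarith)]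
  have h2a : (2 * a) ≠ 0 := by positivity
  have h2bn' : (2 * b + n) ≠ 0 := by positivity
  field_simp
  have hnb : (0:ℝ) ≤ 2 * b - n := by nlinarith
  have hkey : (0:ℝ) ≤ 4 * (b ^ 2 - a ^ 2) - n ^ 2 := by nlinarith
  nlinarith [mul_nonneg (mul_nonneg (mul_nonneg ha.le h2bn.le) hnb) hkey,
    mul_nonneg (mul_nonneg (mul_nonneg ha.le h2bn.le) hb.le) (sq_nonneg a)]
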